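/- arXiv:1802.05618 — 3 statements merged into one kernel-verified Lean document; each statement's English description precedes it below -/
import Mathlib

section
/- Let f : [0,1] → ℝ be twice differentiable with |f''(t)| ≤ ρ for all t. Then for m ≥ 2, the Chebyshev wavelet coefficient f_{nm} = (℘_m / sqrt(2^k π)) ∫_0^π f((cos θ + 2n - 1)/2^k) cos(mθ) dθ satisfies |f_{nm}| ≤ sqrt(π / 2^{5k-1}) · ρ/(m² - 1). -/
open Real intervalIntegral MeasureTheory Set

lemma ibp_cos (u u' : ℝ → ℝ) (j : ℕ) (hj : 1 ≤ j)
    (hu : ∀ θ : ℝ, HasDerivAt u (u' θ) θ)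
    (hu' : IntervalIntegrable u' volume 0 π) :
    ∫ θ in (0:ℝ)..π, u θ * Real.cos (j*θ)
      = -(1/j) * ∫ θ in (0:ℝ)..π, u' θ * Real.sin (j*θ) := by
  have hj0 : (j:ℝ) ≠ 0 := by positivity
  have hv : ∀ θ : ℝ, HasDerivAt (fun θ => Real.sin (j*θ) / j) (Real.cos (j*θ)) θ := by
    intro θ
    have h1 : HasDerivAt (fun θ : ℝ => Real.sin ((j:ℝ)*θ)) (Real.cos ((j:ℝ)*θ) * ((j:ℝ)*1)) θ :=
      (Real.hasDerivAt_sin ((j:ℝ)*θ)).comp θ ((hasDerivAt_id θ).const_mul (j:ℝ))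
    have h2 := h1.div_const (j:ℝ)
    have : Real.cos ((j:ℝ)*θ) * ((j:ℝ)*1) / j = Real.cos ((j:ℝ)*θ) := by
      field_simp
    rwa [this] at h2
  have hvint : IntervalIntegrable (fun θ => Real.cos ((j:ℝ)*θ)) volume 0 π :=
    (Real.continuous_cos.comp (continuous_const.mul continuous_id)).intervalIntegrable 0 π
  have H := integral_mul_deriv_eq_deriv_mul (u := u) (v := fun θ => Real.sin ((j:ℝ)*θ) / j)
    (u' := u') (v' := fun θ => Real.cos ((j:ℝ)*θ))
    (fun θ _ => hu θ) (fun θ _ => hv θ) hu' hvint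
  rw [H]
  have hπ' : Real.sin ((j:ℝ)*π) = 0 := Real.sin_nat_mul_pi j
  simp only [hπ', mul_zero, Real.sin_zero, zero_div, sub_zero, zero_sub, mul_div_assoc]
  rw [show (fun x => u' x * (Real.sin ((j:ℝ)*x) / (j:ℝ))) = fun x => (u' x * Real.sin ((j:ℝ)*x)) / (j:ℝ) by funext x; ring]
  rw [intervalIntegral.integral_div]
  ring

set_option maxHeartbeats 1000000 in
/-- Bound on Chebyshev wavelet coefficients for m ≥ 2 for a twice differentiable
function with bounded second derivative. -/
theorem chebyshev_wavelet_coeff_bound (k n m : ℕ) (hk : 1 ≤ k) (hn : 1 ≤ n)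
    (hn' : n ≤ 2 ^ (k - 1)) (hm : 2 ≤ m) (f f' f'' : ℝ → ℝ) (ρ : ℝ)
    (hd1 : ∀ t ∈ Set.Icc (0 : ℝ) 1, HasDerivAt f (f' t) t)
    (hd2 : ∀ t ∈ Set.Icc (0 : ℝ) 1, HasDerivAt f' (f'' t) t)
    (hρ : ∀ t ∈ Set.Icc (0 : ℝ) 1, |f'' t| ≤ ρ) :
    |(Real.sqrt 2 / Real.sqrt (2 ^ k * Real.pi)) *
        ∫ θ in (0 : ℝ)..Real.pi, f ((Real.cos θ + 2 * n - 1) / 2 ^ k) * Real.cos (m * θ)| ≤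
      Real.sqrt (Real.pi / 2 ^ (5 * k - 1)) * (ρ / ((m : ℝ) ^ 2 - 1)) := by
  have hP : (0:ℝ) < 2 ^ k := by positivity
  set X : ℝ → ℝ := fun θ => (Real.cos θ + 2 * (n:ℝ) - 1) / 2 ^ k with hXdef
  -- X maps into [0,1]
  have hXmem : ∀ θ : ℝ, X θ ∈ Set.Icc (0:ℝ) 1 := by
    intro θ
    have h1 := Real.neg_one_le_cos θ
    have h2 := Real.cos_le_one θ
    have hn1 : (1:ℝ) ≤ (n:ℝ) := by exact_mod_cast hn
    have hup : (n:ℝ) ≤ 2 ^ (k-1) := by exact_mod_cast hn'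
    have h2k : (2:ℝ) * 2 ^ (k-1) = 2 ^ k := by
      rw [← pow_succ']; congr 1; omega
    constructor
    · apply div_nonneg _ hP.le; nlinarith
    · rw [div_le_one hP]; nlinarith
  -- derivative of X
  have hXd : ∀ θ : ℝ, HasDerivAt X (-Real.sin θ / 2 ^ k) θ := fun θ =>
    (((Real.hasDerivAt_cos θ).add_const (2*(n:ℝ))).sub_const 1).div_const ((2:ℝ)^k)
  have hXc : Continuous X := by
    apply Continuous.div_const; exact (Real.continuous_cos.add continuous_const).sub continuous_const
  -- composite derivatives
  have hG : ∀ θ : ℝ, HasDerivAt (fun θ => f (X θ)) (f' (X θ) * (-Real.sin θ / 2 ^ k)) θ := by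
    intro θ
    exact (hd1 (X θ) (hXmem θ)).comp θ (hXd θ)
  have hH : ∀ θ : ℝ, HasDerivAt (fun θ => f' (X θ)) (f'' (X θ) * (-Real.sin θ / 2 ^ k)) θ := by
    intro θ
    exact (hd2 (X θ) (hXmem θ)).comp θ (hXd θ)
  -- continuity of f' ∘ X
  have hf'c : Continuous fun θ => f' (X θ) := by
    rw [continuous_iff_continuousAt]
    exact fun θ => ((hd2 (X θ) (hXmem θ)).continuousAt).comp hXc.continuousAt
  -- measurability of f'' ∘ X
  have hmeas : Measurable fun θ => f'' (X θ) := by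
    have heq : (fun θ => f'' (X θ)) = fun θ => deriv f' (X θ) :=
      funext fun θ => ((hd2 (X θ) (hXmem θ)).deriv).symm
    rw [heq]
    exact (measurable_deriv f').comp hXc.measurable
  have hρ0 : 0 ≤ ρ := le_trans (abs_nonneg _) (hρ 0 ⟨le_refl _, zero_le_one⟩)
  -- integrability of the second-derivative integrand
  set U : ℝ → ℝ := fun θ => f'' (X θ) * (-Real.sin θ / 2 ^ k) with hUdef
  have hUm : Measurable U :=
    hmeas.mul ((Real.continuous_sin.measurable.neg).div_const _)
  have hUbd : ∀ θ : ℝ, |U θ| ≤ ρ / 2 ^ k := by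
    intro θ
    have h1 : |f'' (X θ)| ≤ ρ := hρ _ (hXmem θ)
    have h2 : |(-Real.sin θ / 2 ^ k)| ≤ 1 / 2 ^ k := by
      rw [abs_div, abs_neg, abs_of_pos hP]
      exact div_le_div_of_nonneg_right (Real.abs_sin_le_one θ) hP.le
    calc |U θ| = |f'' (X θ)| * |(-Real.sin θ / 2 ^ k)| := abs_mul _ _
      _ ≤ ρ * (1 / 2 ^ k) := mul_le_mul h1 h2 (abs_nonneg _) hρ0
      _ = ρ / 2 ^ k := by ring
  have hUi : IntervalIntegrable U MeasureTheory.volume 0 π := by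
    apply IntervalIntegrable.mono_fun' (g := fun _ => ρ / 2 ^ k)
      (intervalIntegrable_const)
    · exact hUm.aestronglyMeasurable
    · filter_upwards with θ
      simpa [Real.norm_eq_abs] using hUbd θ
  -- bound on ∫ f'(X θ) cos (j θ) for 1 ≤ j
  have Jlem : ∀ j : ℕ, 1 ≤ j →
      |∫ θ in (0:ℝ)..π, f' (X θ) * Real.cos ((j:ℝ)*θ)| ≤ (1/(j:ℝ)) * (2 * ρ / 2 ^ k) := by
    intro j hj
    rw [ibp_cos _ U j hj hH hUi]
    rw [abs_mul, abs_neg, abs_of_nonneg (by positivity : (0:ℝ) ≤ 1/(j:ℝ))]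
    apply mul_le_mul_of_nonneg_left _ (by positivity : (0:ℝ) ≤ 1/(j:ℝ))
    have hbnd : |∫ θ in (0:ℝ)..π, U θ * Real.sin ((j:ℝ)*θ)|
        ≤ |∫ θ in (0:ℝ)..π, (ρ / 2 ^ k) * Real.sin θ| := by
      rw [← Real.norm_eq_abs]
      apply intervalIntegral.norm_integral_le_abs_of_norm_le
      · filter_upwards [MeasureTheory.ae_restrict_mem measurableSet_uIoc] with θ hθ
        rw [Set.uIoc_of_le Real.pi_nonneg] at hθ
        have hs : 0 ≤ Real.sin θ := Real.sin_nonneg_of_nonneg_of_le_pi hθ.1.le hθ.2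
        have h1 : |f'' (X θ)| ≤ ρ := hρ _ (hXmem θ)
        have h2 : |Real.sin ((j:ℝ)*θ)| ≤ 1 := Real.abs_sin_le_one _
        rw [Real.norm_eq_abs, abs_mul, hUdef]
        simp only
        rw [abs_mul, abs_div, abs_neg, abs_of_pos hP, abs_of_nonneg hs]
        calc |f'' (X θ)| * (Real.sin θ / 2 ^ k) * |Real.sin ((j:ℝ)*θ)|
            ≤ ρ * (Real.sin θ / 2 ^ k) * 1 := by
              apply mul_le_mul _ h2 (abs_nonneg _) (by positivity)
              exact mul_le_mul_of_nonneg_right h1 (by positivity)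
          _ = ρ / 2 ^ k * Real.sin θ := by ring
      · exact (continuous_const.mul Real.continuous_sin).intervalIntegrable 0 π
    have hval : ∫ θ in (0:ℝ)..π, (ρ / 2 ^ k) * Real.sin θ = 2 * ρ / 2 ^ k := by
      rw [intervalIntegral.integral_const_mul, integral_sin]
      simp; ring
    rw [hval] at hbnd
    exact hbnd.trans_eq (abs_of_nonneg (by positivity))
  -- first integration by parts
  have hG'i : IntervalIntegrable (fun θ => f' (X θ) * (-Real.sin θ / 2 ^ k))
      MeasureTheory.volume 0 π :=
    (hf'c.mul ((Real.continuous_sin.neg).div_const _)).intervalIntegrable 0 π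
  have step1 := ibp_cos (fun θ => f (X θ)) _ m (by omega) hG hG'i
  have hm1 : ((m-1:ℕ):ℝ) = (m:ℝ)-1 := by
    have h1 : (1:ℕ) ≤ m := by omega
    rw [Nat.cast_sub h1]; norm_num
  have key : ∀ θ:ℝ, f' (X θ) * (-Real.sin θ / 2^k) * Real.sin ((m:ℝ)*θ)
      = (-(1/(2*2^k))) * (f' (X θ) * Real.cos (((m-1:ℕ):ℝ)*θ)
          - f' (X θ) * Real.cos (((m+1:ℕ):ℝ)*θ)) := by
    intro θ
    rw [hm1]
    push_cast
    rw [sub_mul, one_mul, add_mul, one_mul, Real.cos_sub, Real.cos_add]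
    ring
  have hint1 : IntervalIntegrable (fun θ => f' (X θ) * Real.cos (((m-1:ℕ):ℝ)*θ))
      MeasureTheory.volume 0 π :=
    (hf'c.mul (Real.continuous_cos.comp (continuous_const.mul continuous_id))).intervalIntegrable 0 π
  have hint2 : IntervalIntegrable (fun θ => f' (X θ) * Real.cos (((m+1:ℕ):ℝ)*θ))
      MeasureTheory.volume 0 π :=
    (hf'c.mul (Real.continuous_cos.comp (continuous_const.mul continuous_id))).intervalIntegrable 0 π
  have hIeq : (∫ θ in (0:ℝ)..π, f (X θ) * Real.cos ((m:ℝ)*θ))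
      = (1/(2*(m:ℝ)*2^k)) * ((∫ θ in (0:ℝ)..π, f' (X θ) * Real.cos (((m-1:ℕ):ℝ)*θ))
          - (∫ θ in (0:ℝ)..π, f' (X θ) * Real.cos (((m+1:ℕ):ℝ)*θ))) := by
    rw [step1]
    rw [show (fun θ => f' (X θ) * (-Real.sin θ / 2^k) * Real.sin ((m:ℝ)*θ))
        = fun θ => (-(1/(2*2^k))) * (f' (X θ) * Real.cos (((m-1:ℕ):ℝ)*θ)
          - f' (X θ) * Real.cos (((m+1:ℕ):ℝ)*θ)) from funext key]
    rw [intervalIntegral.integral_const_mul, intervalIntegral.integral_sub hint1 hint2]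
    ring
  have hmR : (2:ℝ) ≤ (m:ℝ) := by exact_mod_cast hm
  have hD : (0:ℝ) < (m:ℝ)^2 - 1 := by nlinarith
  have hJ1 := Jlem (m-1) (by omega)
  have hJ2 := Jlem (m+1) (by omega)
  have hIabs : |∫ θ in (0:ℝ)..π, f (X θ) * Real.cos ((m:ℝ)*θ)|
      ≤ 2*ρ/(((2:ℝ)^k)^2*((m:ℝ)^2-1)) := by
    rw [hIeq, abs_mul, abs_of_nonneg (show (0:ℝ) ≤ 1/(2*(m:ℝ)*2^k) by positivity)]
    calc (1/(2*(m:ℝ)*2^k)) * |_ - _|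
        ≤ (1/(2*(m:ℝ)*2^k)) * ((1/((m-1:ℕ):ℝ))*(2*ρ/2^k) + (1/((m+1:ℕ):ℝ))*(2*ρ/2^k)) := by
          apply mul_le_mul_of_nonneg_left _ (by positivity)
          exact (abs_sub _ _).trans (add_le_add hJ1 hJ2)
      _ = 2*ρ/(((2:ℝ)^k)^2*((m:ℝ)^2-1)) := by
          rw [hm1]
          push_cast
          have h1 : (m:ℝ)-1 ≠ 0 := by nlinarith
          have h2 : (m:ℝ)+1 ≠ 0 := by nlinarith
          have h3 : (2:ℝ)^k ≠ 0 := ne_of_gt hP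
          have h4 : (m:ℝ)^2-1 ≠ 0 := ne_of_gt hD
          field_simp
          ring
  -- the constant comparison
  have hCB : (Real.sqrt 2 / Real.sqrt (2^k * π)) * (2 / ((2:ℝ)^k)^2)
      ≤ Real.sqrt (π / 2^(5*k-1)) := by
    have hπ3 := Real.pi_gt_three
    have h5 : (2:ℝ)^(5*k-1) * 2 = 2^(5*k) := by rw [← pow_succ]; congr 1; omega
    have hpow : (2:ℝ)^k * (((2:ℝ)^k)^2)^2 = 2^(5*k) := by
      rw [← pow_mul, ← pow_mul, ← pow_add]; congr 1; ring
    have hC2 : ((Real.sqrt 2 / Real.sqrt (2^k*π)) * (2/((2:ℝ)^k)^2))^2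
        = 8 / (2^(5*k) * π) := by
      rw [mul_pow, div_pow, div_pow, Real.sq_sqrt (by norm_num : (0:ℝ) ≤ 2),
        Real.sq_sqrt (by positivity : (0:ℝ) ≤ 2^k*π)]
      rw [← hpow]
      have h3 : (2:ℝ)^k ≠ 0 := ne_of_gt hP
      have hπ0 : π ≠ 0 := ne_of_gt Real.pi_pos
      field_simp
      ring
    have hle : 8 / ((2:ℝ)^(5*k)*π) ≤ π / 2^(5*k-1) := by
      rw [div_le_div_iff₀ (by positivity) (by positivity), ← h5]
      have hQ : (0:ℝ) < 2^(5*k-1) := by positivity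
      have hπ2 : (9:ℝ) ≤ π^2 := by nlinarith
      nlinarith [mul_le_mul_of_nonneg_right hπ2 hQ.le, hQ]
    calc (Real.sqrt 2 / Real.sqrt (2^k * π)) * (2 / ((2:ℝ)^k)^2)
        = Real.sqrt (((Real.sqrt 2 / Real.sqrt (2^k * π)) * (2 / ((2:ℝ)^k)^2))^2) :=
          (Real.sqrt_sq (by positivity)).symm
      _ = Real.sqrt (8 / (2^(5*k) * π)) := by rw [hC2]
      _ ≤ Real.sqrt (π / 2^(5*k-1)) := Real.sqrt_le_sqrt hle
  -- assemble
  rw [abs_mul, abs_of_nonneg (show (0:ℝ) ≤ Real.sqrt 2 / Real.sqrt (2^k * π) by positivity)]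
  calc (Real.sqrt 2 / Real.sqrt (2^k * π)) * |∫ θ in (0:ℝ)..π, f (X θ) * Real.cos ((m:ℝ)*θ)|
      ≤ (Real.sqrt 2 / Real.sqrt (2^k * π)) * (2*ρ/(((2:ℝ)^k)^2*((m:ℝ)^2-1))) :=
        mul_le_mul_of_nonneg_left hIabs (by positivity)
    _ = ((Real.sqrt 2 / Real.sqrt (2^k * π)) * (2 / ((2:ℝ)^k)^2)) * (ρ/((m:ℝ)^2-1)) := by
        have h3 : ((2:ℝ)^k) ≠ 0 := ne_of_gt hP
        have h4 : ((m:ℝ)^2 - 1) ≠ 0 := ne_of_gt hD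
        have hsq : Real.sqrt ((2:ℝ)^k*π) ≠ 0 := ne_of_gt (Real.sqrt_pos.2 (by positivity))
        field_simp
    _ ≤ Real.sqrt (π / 2^(5*k-1)) * (ρ/((m:ℝ)^2-1)) :=
        mul_le_mul_of_nonneg_right hCB (div_nonneg hρ0 hD.le)
end

section
/- Let f : [0,1] → ℝ be differentiable with |f'(t)| ≤ ρ₁ for all t. Then the Chebyshev wavelet coefficient f_{n1} = (√2 / sqrt(2^k π)) ∫_0^π f((cos θ + 2n - 1)/2^k) cos θ dθ satisfies |f_{n1}| ≤ sqrt(π / 2^{3k-1}) · ρ₁. -/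
open Real intervalIntegral

/-- Bound on the Chebyshev wavelet coefficient f_{n1} for a differentiable
function with bounded derivative. -/
theorem chebyshev_wavelet_coeff_one_bound (k n : ℕ) (hk : 1 ≤ k) (hn : 1 ≤ n)
    (hn' : n ≤ 2 ^ (k - 1)) (f f' : ℝ → ℝ) (ρ₁ : ℝ)
    (hd : ∀ t ∈ Set.Icc (0 : ℝ) 1, HasDerivAt f (f' t) t)
    (hρ : ∀ t ∈ Set.Icc (0 : ℝ) 1, |f' t| ≤ ρ₁) :
    |(Real.sqrt 2 / Real.sqrt (2 ^ k * Real.pi)) *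
        ∫ θ in (0 : ℝ)..Real.pi, f ((Real.cos θ + 2 * n - 1) / 2 ^ k) * Real.cos θ| ≤
      Real.sqrt (Real.pi / 2 ^ (3 * k - 1)) * ρ₁ := by
  have hK : (0:ℝ) < 2 ^ k := by positivity
  have hρ0 : 0 ≤ ρ₁ := le_trans (abs_nonneg _) (hρ 0 ⟨le_refl 0, zero_le_one⟩)
  have hn1 : (1:ℝ) ≤ (n:ℝ) := by exact_mod_cast hn
  have hnk : (2:ℝ) * n ≤ 2 ^ k := by
    have h : 2 * n ≤ 2 ^ k := by
      calc 2 * n ≤ 2 * 2 ^ (k-1) := by omega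
        _ = 2 ^ k := by rw [← pow_succ']; congr 1; omega
    exact_mod_cast h
  set x : ℝ → ℝ := fun θ => (Real.cos θ + 2 * n - 1) / 2 ^ k with hxdef
  have hxmem : ∀ θ : ℝ, x θ ∈ Set.Icc (0:ℝ) 1 := by
    intro θ
    have h1 := Real.neg_one_le_cos θ
    have h2 := Real.cos_le_one θ
    constructor
    · apply div_nonneg _ hK.le; nlinarith
    · rw [div_le_one hK]; nlinarith
  set m : ℝ := (2 * n - 1) / 2 ^ k with hmdef
  have hmmem : m ∈ Set.Icc (0:ℝ) 1 := by
    constructor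
    · apply div_nonneg _ hK.le; nlinarith
    · rw [div_le_one hK]; nlinarith
  -- Lipschitz estimate
  have hlip : ∀ θ : ℝ, |f (x θ) - f m| ≤ ρ₁ * |Real.cos θ| / 2 ^ k := by
    intro θ
    have key := (convex_Icc (0:ℝ) 1).norm_image_sub_le_of_norm_hasDerivWithin_le
      (f' := f') (fun t ht => (hd t ht).hasDerivWithinAt)
      (fun t ht => by rw [Real.norm_eq_abs]; exact hρ t ht) hmmem (hxmem θ)
    rw [Real.norm_eq_abs, Real.norm_eq_abs] at key
    have hdiff : x θ - m = Real.cos θ / 2 ^ k := by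
      rw [hxdef, hmdef]; field_simp; ring
    calc |f (x θ) - f m| ≤ ρ₁ * |x θ - m| := key
      _ = ρ₁ * |Real.cos θ| / 2 ^ k := by
          rw [hdiff, abs_div, abs_of_pos hK]; ring
  -- continuity and integrability
  have hfc : ContinuousOn f (Set.Icc 0 1) :=
    fun t ht => (hd t ht).continuousAt.continuousWithinAt
  have hxc : Continuous x := by
    apply Continuous.div_const
    exact (Real.continuous_cos.add continuous_const).sub continuous_const
  have hcomp : ContinuousOn (fun θ => f (x θ)) (Set.uIcc 0 Real.pi) :=
    hfc.comp hxc.continuousOn (fun θ _ => hxmem θ)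
  have hint1 : IntervalIntegrable (fun θ => f (x θ) * Real.cos θ)
      MeasureTheory.volume 0 Real.pi :=
    (hcomp.mul Real.continuous_cos.continuousOn).intervalIntegrable
  have hconstI : IntervalIntegrable (fun θ => f m * Real.cos θ)
      MeasureTheory.volume 0 Real.pi :=
    (continuous_const.mul Real.continuous_cos).intervalIntegrable _ _
  have hint2 : IntervalIntegrable (fun θ => (f (x θ) - f m) * Real.cos θ)
      MeasureTheory.volume 0 Real.pi :=
    ((hcomp.sub continuousOn_const).mul Real.continuous_cos.continuousOn).intervalIntegrable
  -- subtract the constant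
  have hzero : ∫ θ in (0:ℝ)..Real.pi, f m * Real.cos θ = 0 := by
    rw [intervalIntegral.integral_const_mul, integral_cos]
    simp
  have hI : ∫ θ in (0:ℝ)..Real.pi, f (x θ) * Real.cos θ
      = ∫ θ in (0:ℝ)..Real.pi, (f (x θ) - f m) * Real.cos θ := by
    have hsub : ∫ θ in (0:ℝ)..Real.pi, (f (x θ) - f m) * Real.cos θ
        = (∫ θ in (0:ℝ)..Real.pi, f (x θ) * Real.cos θ)
          - ∫ θ in (0:ℝ)..Real.pi, f m * Real.cos θ := by
      rw [← intervalIntegral.integral_sub hint1 hconstI]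
      congr 1; funext θ; ring
    rw [hsub, hzero, sub_zero]
  -- bound the integral
  have habs : |∫ θ in (0:ℝ)..Real.pi, (f (x θ) - f m) * Real.cos θ|
      ≤ ρ₁ / 2 ^ k * (Real.pi / 2) := by
    have h1 : |∫ θ in (0:ℝ)..Real.pi, (f (x θ) - f m) * Real.cos θ|
        ≤ ∫ θ in (0:ℝ)..Real.pi, |(f (x θ) - f m) * Real.cos θ| := by
      have := intervalIntegral.norm_integral_le_integral_norm
        (f := fun θ => (f (x θ) - f m) * Real.cos θ) (a := (0:ℝ)) (b := Real.pi)
        (μ := MeasureTheory.volume)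
        Real.pi_pos.le
      simpa [abs_mul] using this
    have h2 : ∫ θ in (0:ℝ)..Real.pi, |(f (x θ) - f m) * Real.cos θ|
        ≤ ∫ θ in (0:ℝ)..Real.pi, ρ₁ / 2 ^ k * Real.cos θ ^ 2 := by
      apply intervalIntegral.integral_mono_on Real.pi_pos.le hint2.abs
      · exact (Continuous.intervalIntegrable (by continuity) _ _)
      · intro θ _
        rw [abs_mul]
        calc |f (x θ) - f m| * |Real.cos θ|
            ≤ (ρ₁ * |Real.cos θ| / 2 ^ k) * |Real.cos θ| :=
              mul_le_mul_of_nonneg_right (hlip θ) (abs_nonneg _)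
          _ = ρ₁ / 2 ^ k * |Real.cos θ| ^ 2 := by ring
          _ = ρ₁ / 2 ^ k * Real.cos θ ^ 2 := by rw [sq_abs]
    have h3 : ∫ θ in (0:ℝ)..Real.pi, ρ₁ / 2 ^ k * Real.cos θ ^ 2
        = ρ₁ / 2 ^ k * (Real.pi / 2) := by
      rw [intervalIntegral.integral_const_mul, integral_cos_sq]
      simp
    linarith
  -- assemble
  have hCnn : (0:ℝ) ≤ Real.sqrt 2 / Real.sqrt (2 ^ k * Real.pi) := by positivity
  rw [hI, abs_mul, abs_of_nonneg hCnn]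
  have step1 : Real.sqrt 2 / Real.sqrt (2 ^ k * Real.pi)
        * |∫ θ in (0:ℝ)..Real.pi, (f (x θ) - f m) * Real.cos θ|
      ≤ Real.sqrt 2 / Real.sqrt (2 ^ k * Real.pi) * (ρ₁ / 2 ^ k * (Real.pi / 2)) :=
    mul_le_mul_of_nonneg_left habs hCnn
  refine step1.trans ?_
  -- final arithmetic
  have hA0 : (0:ℝ) ≤ Real.sqrt 2 / Real.sqrt (2 ^ k * Real.pi) * (Real.pi / 2 ^ k / 2) := by
    positivity
  have key : Real.sqrt 2 / Real.sqrt (2 ^ k * Real.pi) * (Real.pi / 2 ^ k / 2)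
      ≤ Real.sqrt (Real.pi / 2 ^ (3 * k - 1)) := by
    rw [← Real.sqrt_sq hA0]
    apply Real.sqrt_le_sqrt
    have hs2 : Real.sqrt 2 ^ 2 = 2 := Real.sq_sqrt (by norm_num)
    have hsk : Real.sqrt (2 ^ k * Real.pi) ^ 2 = 2 ^ k * Real.pi :=
      Real.sq_sqrt (by positivity)
    have hK3 : (2:ℝ) ^ (3 * k - 1) * 2 = ((2:ℝ) ^ k) ^ 3 := by
      rw [← pow_succ, ← pow_mul]
      congr 1
      omega
    have hπ := Real.pi_pos
    have h3k : (0:ℝ) < 2 ^ (3*k-1) := by positivity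
    have heq : (Real.sqrt 2 / Real.sqrt (2 ^ k * Real.pi) * (Real.pi / 2 ^ k / 2)) ^ 2
        = Real.pi / (2 * ((2:ℝ) ^ k) ^ 3) := by
      rw [mul_pow, div_pow, hs2, hsk]
      field_simp
    rw [heq, div_le_div_iff₀ (by positivity) h3k]
    nlinarith [pow_pos hK 3, hπ.le]
  calc Real.sqrt 2 / Real.sqrt (2 ^ k * Real.pi) * (ρ₁ / 2 ^ k * (Real.pi / 2))
      = Real.sqrt 2 / Real.sqrt (2 ^ k * Real.pi) * (Real.pi / 2 ^ k / 2) * ρ₁ := by ring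
    _ ≤ Real.sqrt (Real.pi / 2 ^ (3 * k - 1)) * ρ₁ :=
        mul_le_mul_of_nonneg_right key hρ0
end

section
/- Let f : [0,1] → ℝ be twice continuously differentiable with |f(t)| ≤ ρ₀, |f'(t)| ≤ ρ₁, and |f''(t)| ≤ ρ for all t ∈ [0,1]. Then for each n, the series Σ_{m=0}^∞ f_{nm} ψ_{nm}(t) converges absolutely and uniformly on [(n-1)/2^{k-1}, n/2^{k-1}], and its partial sums are bounded by ρ₀ + ρ₁/2^{k-1} + (3/4)·ρ/2^{2k-1}. -/
open Polynomial Chebyshev Real MeasureTheory intervalIntegral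

/-- The factor ℘_m: 1 for m = 0 and √2 for m ≥ 1. -/
noncomputable def wp (m : ℕ) : ℝ := if m = 0 then 1 else Real.sqrt 2

open scoped Classical in
/-- The Chebyshev wavelet ψ_{nm} at level k, on [0,1]. -/
noncomputable def psi (k n m : ℕ) (t : ℝ) : ℝ :=
  if ((n - 1 : ℝ) / 2 ^ (k - 1) ≤ t ∧ t ≤ (n : ℝ) / 2 ^ (k - 1)) then
    Real.sqrt (2 ^ k / Real.pi) * wp m *
      (Polynomial.Chebyshev.T ℝ m).eval (2 ^ k * t - 2 * n + 1)
  else 0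

/-- The Chebyshev wavelet coefficient of `f` for indices `n, m`. -/
noncomputable def coeff (k n m : ℕ) (f : ℝ → ℝ) : ℝ :=
  (wp m / Real.sqrt (2 ^ k * Real.pi)) *
    ∫ x in (0 : ℝ)..Real.pi, f ((Real.cos x + 2 * n - 1) / 2 ^ k) * Real.cos (m * x)

namespace ChebWaveletAux

lemma T_abs_le (m : ℤ) {x : ℝ} (hx : -1 ≤ x) (hx' : x ≤ 1) :
    |(Polynomial.Chebyshev.T ℝ m).eval x| ≤ 1 := by
  have h := Polynomial.Chebyshev.T_real_cos (Real.arccos x) m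
  rw [Real.cos_arccos hx hx'] at h
  rw [h]
  exact Real.abs_cos_le_one _

lemma telescope (M : ℕ) :
    ∑ j ∈ Finset.range M, (1:ℝ)/(((j:ℝ)+1)*((j:ℝ)+3))
      = 3/4 - 1/(2*((M:ℝ)+1)) - 1/(2*((M:ℝ)+2)) := by
  induction M with
  | zero => norm_num
  | succ M ih =>
    rw [Finset.sum_range_succ, ih]
    have h1 : ((M:ℝ)+1) ≠ 0 := by positivity
    have h2 : ((M:ℝ)+2) ≠ 0 := by positivity
    have h3 : ((M:ℝ)+3) ≠ 0 := by positivity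
    push_cast
    field_simp
    ring

lemma sin_mul_sin (A th g : ℝ) :
    Real.sin th * g * Real.sin (A*th)
      = (g * Real.cos ((A-1)*th) - g * Real.cos ((A+1)*th))/2 := by
  have h := Real.cos_sub_cos ((A-1)*th) ((A+1)*th)
  rw [show ((A-1)*th + (A+1)*th)/2 = A*th by ring, show ((A-1)*th - (A+1)*th)/2 = -th by ring,
    Real.sin_neg] at h
  linear_combination (-g/2) * h

lemma abs_int_le {g : ℝ → ℝ} {ρ' : ℝ}
    (hb : ∀ th ∈ Set.Icc (0:ℝ) Real.pi, |g th| ≤ ρ') (r : ℝ) :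
    |∫ th in (0:ℝ)..Real.pi, Real.sin th * g th * Real.sin (r*th)| ≤ ρ' * Real.pi := by
  have h := intervalIntegral.norm_integral_le_of_norm_le_const (C := ρ')
    (f := fun th => Real.sin th * g th * Real.sin (r*th)) (a := 0) (b := Real.pi) ?_
  · rw [Real.norm_eq_abs] at h
    calc |∫ th in (0:ℝ)..Real.pi, Real.sin th * g th * Real.sin (r*th)|
        ≤ ρ' * |Real.pi - 0| := h
      _ = ρ' * Real.pi := by rw [sub_zero, abs_of_nonneg Real.pi_pos.le]
  · intro x hx
    rw [Set.uIoc_of_le Real.pi_pos.le] at hx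
    have hx' : x ∈ Set.Icc (0:ℝ) Real.pi := ⟨hx.1.le, hx.2⟩
    have hg := hb x hx'
    rw [Real.norm_eq_abs, abs_mul, abs_mul]
    have h1 : |Real.sin x| ≤ 1 := Real.abs_sin_le_one x
    have h2 : |Real.sin (r*x)| ≤ 1 := Real.abs_sin_le_one _
    have hρnn : 0 ≤ ρ' := (abs_nonneg _).trans hg
    calc |Real.sin x| * |g x| * |Real.sin (r*x)|
        ≤ 1 * ρ' * 1 := by
          apply mul_le_mul _ h2 (abs_nonneg _) (by linarith)
          exact mul_le_mul h1 hg (abs_nonneg _) zero_le_one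
      _ = ρ' := by ring

lemma ibp {K : ℝ} (hK : 0 < K) (u h h' : ℝ → ℝ)
    (hu' : ∀ th, HasDerivAt u (-Real.sin th / K) th)
    (hmem : ∀ th ∈ Set.Icc (0:ℝ) Real.pi, u th ∈ Set.Icc (0:ℝ) 1)
    (hd : ∀ t ∈ Set.Icc (0:ℝ) 1, HasDerivAt h (h' t) t)
    (hcont : ContinuousOn (fun th => h' (u th)) (Set.Icc (0:ℝ) Real.pi))
    (j : ℕ) (hj : 1 ≤ j) :
    ∫ th in (0:ℝ)..Real.pi, h (u th) * Real.cos (j*th)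
      = (1/(j*K)) * ∫ th in (0:ℝ)..Real.pi, Real.sin th * h' (u th) * Real.sin (j*th) := by
  have hπ := Real.pi_pos
  have hjR : (0:ℝ) < (j:ℝ) := by exact_mod_cast Nat.lt_of_lt_of_le Nat.zero_lt_one hj
  have hu_cont : Continuous u := by
    rw [continuous_iff_continuousAt]; exact fun th => (hu' th).continuousAt
  have hhu_cont : ContinuousOn (fun th => h (u th)) (Set.Icc 0 Real.pi) := fun th hth =>
    ((hd _ (hmem th hth)).continuousAt.comp hu_cont.continuousAt).continuousWithinAt
  have c1 : Continuous fun th : ℝ => Real.cos ((j:ℝ)*th) := by fun_prop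
  have c2 : Continuous fun th : ℝ => Real.sin ((j:ℝ)*th) := by fun_prop
  have hcont1 : ContinuousOn (fun th => h (u th) * Real.cos ((j:ℝ)*th)) (Set.Icc 0 Real.pi) :=
    hhu_cont.mul c1.continuousOn
  have hcont2 : ContinuousOn (fun th => Real.sin th * h' (u th) * Real.sin ((j:ℝ)*th))
      (Set.Icc 0 Real.pi) :=
    (Real.continuous_sin.continuousOn.mul hcont).mul c2.continuousOn
  have hIcc : Set.uIcc (0:ℝ) Real.pi = Set.Icc 0 Real.pi := Set.uIcc_of_le hπ.le
  have hint1 : IntervalIntegrable (fun th => h (u th) * Real.cos ((j:ℝ)*th))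
      MeasureTheory.volume 0 Real.pi := by
    apply ContinuousOn.intervalIntegrable; rwa [hIcc]
  have hint2 : IntervalIntegrable (fun th => Real.sin th * h' (u th) * Real.sin ((j:ℝ)*th))
      MeasureTheory.volume 0 Real.pi := by
    apply ContinuousOn.intervalIntegrable; rwa [hIcc]
  set D : ℝ → ℝ := fun th =>
    h (u th) * Real.cos ((j:ℝ)*th)
      - (1/((j:ℝ)*K)) * (Real.sin th * h' (u th) * Real.sin ((j:ℝ)*th)) with hD
  have key : ∀ th ∈ Set.uIcc (0:ℝ) Real.pi,
      HasDerivAt (fun th => h (u th) * (Real.sin ((j:ℝ)*th) / (j:ℝ))) (D th) th := by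
    intro th hth
    rw [hIcc] at hth
    have h1 : HasDerivAt (fun th => h (u th)) (h' (u th) * (-Real.sin th / K)) th :=
      (hd _ (hmem th hth)).comp th (hu' th)
    have h2 : HasDerivAt (fun th : ℝ => Real.sin ((j:ℝ)*th)) (Real.cos ((j:ℝ)*th) * ((j:ℝ)*1)) th :=
      (Real.hasDerivAt_sin ((j:ℝ)*th)).comp th ((hasDerivAt_id th).const_mul (j:ℝ))
    have h3 := h1.mul (h2.div_const (j:ℝ))
    refine HasDerivAt.congr_deriv h3 ?_
    rw [hD]
    field_simp
    ring
  have hintD : IntervalIntegrable D MeasureTheory.volume 0 Real.pi :=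
    hint1.sub (hint2.const_mul _)
  have hzero : ∫ th in (0:ℝ)..Real.pi, D th = 0 := by
    rw [intervalIntegral.integral_eq_sub_of_hasDerivAt key hintD]
    simp [Real.sin_nat_mul_pi]
  rw [intervalIntegral.integral_sub hint1 (hint2.const_mul _),
    intervalIntegral.integral_const_mul] at hzero
  linarith [hzero]

end ChebWaveletAux

set_option maxHeartbeats 1000000 in
open ChebWaveletAux in
/-- For a C² function with |f| ≤ ρ₀, |f'| ≤ ρ₁, |f''| ≤ ρ on [0,1], the series
Σ_m f_{nm} ψ_{nm}(t) converges absolutely and uniformly on the n-th subinterval,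
with partial sums bounded by ρ₀ + ρ₁/2^{k-1} + (3/4)ρ/2^{2k-1}. -/
theorem chebyshev_wavelet_series_bounded (k n : ℕ) (hk : 1 ≤ k) (hn : 1 ≤ n)
    (hn' : n ≤ 2 ^ (k - 1)) (f f' f'' : ℝ → ℝ) (ρ₀ ρ₁ ρ : ℝ)
    (hd1 : ∀ t ∈ Set.Icc (0 : ℝ) 1, HasDerivAt f (f' t) t)
    (hd2 : ∀ t ∈ Set.Icc (0 : ℝ) 1, HasDerivAt f' (f'' t) t)
    (hc : ContinuousOn f'' (Set.Icc (0 : ℝ) 1))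
    (h0 : ∀ t ∈ Set.Icc (0 : ℝ) 1, |f t| ≤ ρ₀)
    (h1 : ∀ t ∈ Set.Icc (0 : ℝ) 1, |f' t| ≤ ρ₁)
    (h2 : ∀ t ∈ Set.Icc (0 : ℝ) 1, |f'' t| ≤ ρ) :
    (∀ t ∈ Set.Icc ((n - 1 : ℝ) / 2 ^ (k - 1)) ((n : ℝ) / 2 ^ (k - 1)),
        Summable (fun m : ℕ => |coeff k n m f * psi k n m t|)) ∧
    TendstoUniformlyOn
      (fun N : ℕ => fun t : ℝ => ∑ m ∈ Finset.range N, coeff k n m f * psi k n m t)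
      (fun t : ℝ => ∑' m : ℕ, coeff k n m f * psi k n m t) Filter.atTop
      (Set.Icc ((n - 1 : ℝ) / 2 ^ (k - 1)) ((n : ℝ) / 2 ^ (k - 1))) ∧
    (∀ t ∈ Set.Icc ((n - 1 : ℝ) / 2 ^ (k - 1)) ((n : ℝ) / 2 ^ (k - 1)), ∀ N : ℕ,
        |∑ m ∈ Finset.range N, coeff k n m f * psi k n m t| ≤
          ρ₀ + ρ₁ / 2 ^ (k - 1) + (3 / 4) * (ρ / 2 ^ (2 * k - 1))) := by
  have hπ := Real.pi_pos
  have hρ₀ : 0 ≤ ρ₀ := le_trans (abs_nonneg _) (h0 0 (by norm_num))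
  have hρ₁ : 0 ≤ ρ₁ := le_trans (abs_nonneg _) (h1 0 (by norm_num))
  have hρ : 0 ≤ ρ := le_trans (abs_nonneg _) (h2 0 (by norm_num))
  have hK : (0:ℝ) < 2^k := by positivity
  have hk1 : (0:ℝ) < 2^(k-1) := by positivity
  have h2k : (2:ℝ)^k = 2 * 2^(k-1) := by
    rw [← pow_succ']
    congr 1
    omega
  have h2k2 : (2:ℝ)^(2*k) = 2^k * 2^k := by rw [← pow_add]; congr 1; omega
  have h2k3 : (2:ℝ)^(2*k) = 2^(2*k-1) * 2 := by rw [← pow_succ]; congr 1; omega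
  -- the substitution u
  set u : ℝ → ℝ := fun th => (Real.cos th + 2*(n:ℝ) - 1)/2^k with hu_def
  have hu' : ∀ th, HasDerivAt u (-Real.sin th / 2^k) th := fun th =>
    (((Real.hasDerivAt_cos th).add_const (2*(n:ℝ))).sub_const 1).div_const (2^k)
  have hmem : ∀ th ∈ Set.Icc (0:ℝ) Real.pi, u th ∈ Set.Icc (0:ℝ) 1 := by
    intro th _
    have hc1 : -1 ≤ Real.cos th := Real.neg_one_le_cos th
    have hc2 : Real.cos th ≤ 1 := Real.cos_le_one th
    have hnn : (1:ℝ) ≤ (n:ℝ) := by exact_mod_cast hn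
    have hnk : (n:ℝ) ≤ 2^(k-1) := by exact_mod_cast hn'
    constructor
    · apply div_nonneg _ hK.le
      linarith
    · rw [div_le_one hK]
      linarith [h2k]
  have hu_cont : Continuous u := by
    rw [continuous_iff_continuousAt]; exact fun th => (hu' th).continuousAt
  have hf'cont : ContinuousOn (fun th => f' (u th)) (Set.Icc 0 Real.pi) := fun th hth =>
    ((hd2 _ (hmem th hth)).continuousAt.comp (hu' th).continuousAt).continuousWithinAt
  have hf''cont : ContinuousOn (fun th => f'' (u th)) (Set.Icc 0 Real.pi) :=
    hc.comp hu_cont.continuousOn hmem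
  -- the integrals I m
  set I : ℕ → ℝ := fun m => ∫ th in (0:ℝ)..Real.pi, f (u th) * Real.cos ((m:ℝ)*th) with hI_def
  have hcoeff : ∀ m, coeff k n m f = (wp m / Real.sqrt (2^k*Real.pi)) * I m := fun m => rfl
  -- bounds on I
  have hI0 : |I 0| ≤ ρ₀ * Real.pi := by
    have h := intervalIntegral.norm_integral_le_of_norm_le_const (C := ρ₀)
      (f := fun th => f (u th) * Real.cos (((0:ℕ):ℝ)*th)) (a := 0) (b := Real.pi) ?_
    · rw [Real.norm_eq_abs] at h
      calc |I 0| ≤ ρ₀ * |Real.pi - 0| := h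
        _ = ρ₀ * Real.pi := by rw [sub_zero, abs_of_nonneg hπ.le]
    · intro x hx
      rw [Set.uIoc_of_le hπ.le] at hx
      have hx' : x ∈ Set.Icc (0:ℝ) Real.pi := ⟨hx.1.le, hx.2⟩
      have := h0 _ (hmem x hx')
      simp only [Nat.cast_zero, zero_mul, Real.cos_zero, mul_one, Real.norm_eq_abs]
      exact this
  have hI1 : ∀ m : ℕ, 1 ≤ m → |I m| ≤ (1/((m:ℝ)*2^k)) * (ρ₁ * Real.pi) := by
    intro m hm
    have heq := ibp hK u f f' hu' hmem hd1 hf'cont m hm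
    have hmR : (0:ℝ) < (m:ℝ) := by exact_mod_cast Nat.lt_of_lt_of_le Nat.zero_lt_one hm
    rw [hI_def]
    simp only
    rw [heq, abs_mul, abs_of_nonneg (by positivity : (0:ℝ) ≤ 1/((m:ℝ)*2^k))]
    exact mul_le_mul_of_nonneg_left
      (abs_int_le (fun th hth => h1 _ (hmem th hth)) (m:ℝ)) (by positivity)
  have hI2 : ∀ m : ℕ, 2 ≤ m → |I m| ≤ ρ * Real.pi / (2^(2*k) * ((m:ℝ)^2 - 1)) := by
    intro m hm
    have hm1 : (1:ℝ) < (m:ℝ) := by exact_mod_cast hm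
    have hmR : (0:ℝ) < (m:ℝ) := by linarith
    have heq := ibp hK u f f' hu' hmem hd1 hf'cont m (by omega)
    have hK1 := ibp hK u f' f'' hu' hmem hd2 hf''cont (m-1) (by omega)
    have hK2 := ibp hK u f' f'' hu' hmem hd2 hf''cont (m+1) (by omega)
    have hcast1 : ((m-1:ℕ):ℝ) = (m:ℝ)-1 := by
      rw [Nat.cast_sub (by omega), Nat.cast_one]
    have hcast2 : ((m+1:ℕ):ℝ) = (m:ℝ)+1 := by push_cast; ring
    rw [hcast1] at hK1
    rw [hcast2] at hK2
    -- integrability needed to split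
    have c1 : Continuous fun th : ℝ => Real.cos (((m:ℝ)-1)*th) := by fun_prop
    have c2 : Continuous fun th : ℝ => Real.cos (((m:ℝ)+1)*th) := by fun_prop
    have hIcc : Set.uIcc (0:ℝ) Real.pi = Set.Icc 0 Real.pi := Set.uIcc_of_le hπ.le
    have hint1 : IntervalIntegrable (fun th => f' (u th) * Real.cos (((m:ℝ)-1)*th))
        MeasureTheory.volume 0 Real.pi := by
      apply ContinuousOn.intervalIntegrable
      rw [hIcc]; exact hf'cont.mul c1.continuousOn
    have hint2 : IntervalIntegrable (fun th => f' (u th) * Real.cos (((m:ℝ)+1)*th))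
        MeasureTheory.volume 0 Real.pi := by
      apply ContinuousOn.intervalIntegrable
      rw [hIcc]; exact hf'cont.mul c2.continuousOn
    have hJsplit : (∫ th in (0:ℝ)..Real.pi, Real.sin th * f' (u th) * Real.sin ((m:ℝ)*th))
        = ((∫ th in (0:ℝ)..Real.pi, f' (u th) * Real.cos (((m:ℝ)-1)*th))
          - ∫ th in (0:ℝ)..Real.pi, f' (u th) * Real.cos (((m:ℝ)+1)*th))/2 := by
      rw [← intervalIntegral.integral_sub hint1 hint2, ← intervalIntegral.integral_div]
      apply intervalIntegral.integral_congr
      intro th _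
      exact sin_mul_sin (m:ℝ) th (f' (u th))
    have hL1 : |∫ th in (0:ℝ)..Real.pi, Real.sin th * f'' (u th) * Real.sin (((m:ℝ)-1)*th)|
        ≤ ρ * Real.pi := abs_int_le (fun th hth => h2 _ (hmem th hth)) _
    have hL2 : |∫ th in (0:ℝ)..Real.pi, Real.sin th * f'' (u th) * Real.sin (((m:ℝ)+1)*th)|
        ≤ ρ * Real.pi := abs_int_le (fun th hth => h2 _ (hmem th hth)) _
    have hKb1 : |∫ th in (0:ℝ)..Real.pi, f' (u th) * Real.cos (((m:ℝ)-1)*th)|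
        ≤ (1/(((m:ℝ)-1)*2^k)) * (ρ * Real.pi) := by
      have hnn : (0:ℝ) ≤ 1/(((m:ℝ)-1)*2^k) :=
        div_nonneg zero_le_one (mul_nonneg (by linarith) hK.le)
      rw [hK1, abs_mul, abs_of_nonneg hnn]
      exact mul_le_mul_of_nonneg_left hL1 hnn
    have hKb2 : |∫ th in (0:ℝ)..Real.pi, f' (u th) * Real.cos (((m:ℝ)+1)*th)|
        ≤ (1/(((m:ℝ)+1)*2^k)) * (ρ * Real.pi) := by
      have hnn : (0:ℝ) ≤ 1/(((m:ℝ)+1)*2^k) :=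
        div_nonneg zero_le_one (mul_nonneg (by linarith) hK.le)
      rw [hK2, abs_mul, abs_of_nonneg hnn]
      exact mul_le_mul_of_nonneg_left hL2 hnn
    rw [hI_def]
    simp only
    rw [heq, hJsplit, abs_mul, abs_of_nonneg (by positivity : (0:ℝ) ≤ 1/((m:ℝ)*2^k)),
      abs_div, abs_two]
    have htri : |(∫ th in (0:ℝ)..Real.pi, f' (u th) * Real.cos (((m:ℝ)-1)*th))
          - ∫ th in (0:ℝ)..Real.pi, f' (u th) * Real.cos (((m:ℝ)+1)*th)|
        ≤ (1/(((m:ℝ)-1)*2^k)) * (ρ * Real.pi) + (1/(((m:ℝ)+1)*2^k)) * (ρ * Real.pi) := by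
      calc _ ≤ |∫ th in (0:ℝ)..Real.pi, f' (u th) * Real.cos (((m:ℝ)-1)*th)|
            + |∫ th in (0:ℝ)..Real.pi, f' (u th) * Real.cos (((m:ℝ)+1)*th)| := abs_sub _ _
        _ ≤ _ := add_le_add hKb1 hKb2
    calc (1/((m:ℝ)*2^k)) * (|(∫ th in (0:ℝ)..Real.pi, f' (u th) * Real.cos (((m:ℝ)-1)*th))
          - ∫ th in (0:ℝ)..Real.pi, f' (u th) * Real.cos (((m:ℝ)+1)*th)| / 2)
        ≤ (1/((m:ℝ)*2^k)) * (((1/(((m:ℝ)-1)*2^k)) * (ρ * Real.pi)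
            + (1/(((m:ℝ)+1)*2^k)) * (ρ * Real.pi)) / 2) := by
          apply mul_le_mul_of_nonneg_left _ (by positivity)
          linarith
      _ = ρ * Real.pi / (2^(2*k) * ((m:ℝ)^2 - 1)) := by
          rw [h2k2]
          have hm1' : (m:ℝ) - 1 ≠ 0 := by linarith
          have hm2' : (m:ℝ) + 1 ≠ 0 := by linarith
          have hsq : (m:ℝ)^2 - 1 ≠ 0 := by nlinarith
          field_simp
          ring
  -- the majorant sequence B
  set B : ℕ → ℝ := fun m => if m = 0 then ρ₀ else if m = 1 then ρ₁/2^(k-1)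
    else 2*ρ/(2^(2*k)*((m:ℝ)^2-1)) with hB_def
  have hBnn : ∀ m, 0 ≤ B m := by
    intro m
    rw [hB_def]
    simp only
    split
    · exact hρ₀
    · split
      · positivity
      · rename_i hm0 hm1
        have hm : 2 ≤ m := by omega
        have hm1' : (1:ℝ) < (m:ℝ) := by exact_mod_cast hm
        have : (0:ℝ) < (m:ℝ)^2 - 1 := by nlinarith
        positivity
  -- per-term bound
  have hwp_nn : ∀ m, 0 ≤ wp m := by
    intro m; rw [wp]; split
    · norm_num
    · exact Real.sqrt_nonneg 2
  have hs0 : (0:ℝ) < Real.sqrt ((2:ℝ)^k*Real.pi) := Real.sqrt_pos.mpr (by positivity)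
  have hs1 : Real.sqrt ((2:ℝ)^k/Real.pi) = Real.sqrt ((2:ℝ)^k*Real.pi)/Real.pi := by
    rw [show (2:ℝ)^k/Real.pi = (2^k*Real.pi)/Real.pi^2 by field_simp,
      Real.sqrt_div (by positivity), Real.sqrt_sq hπ.le]
  have hterm : ∀ t ∈ Set.Icc ((n - 1 : ℝ) / 2 ^ (k - 1)) ((n : ℝ) / 2 ^ (k - 1)), ∀ m : ℕ,
      |coeff k n m f * psi k n m t| ≤ B m := by
    intro t ht m
    have hpsi : psi k n m t = Real.sqrt (2^k/Real.pi) * wp m *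
        (Polynomial.Chebyshev.T ℝ m).eval (2^k*t - 2*n + 1) := by
      simp only [_root_.psi]
      rw [if_pos ⟨ht.1, ht.2⟩]
    have ht1 := ht.1
    have ht2 := ht.2
    rw [div_le_iff₀ hk1] at ht1
    rw [le_div_iff₀ hk1] at ht2
    have hx1 : -1 ≤ 2^k*t - 2*(n:ℝ) + 1 := by
      rw [h2k]
      linarith
    have hx2 : 2^k*t - 2*(n:ℝ) + 1 ≤ 1 := by
      rw [h2k]
      linarith
    have hT : |(Polynomial.Chebyshev.T ℝ m).eval (2^k*t - 2*(n:ℝ) + 1)| ≤ 1 :=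
      T_abs_le (m:ℤ) hx1 hx2
    have habs : |coeff k n m f * psi k n m t| ≤ wp m * wp m / Real.pi * |I m| := by
      rw [hcoeff m, hpsi, abs_mul, abs_mul, abs_mul, abs_mul,
        abs_of_nonneg (div_nonneg (hwp_nn m) hs0.le),
        abs_of_nonneg (Real.sqrt_nonneg _), abs_of_nonneg (hwp_nn m), hs1]
      have key : ∀ y : ℝ, wp m / Real.sqrt (2^k*Real.pi) * y *
          (Real.sqrt (2^k*Real.pi)/Real.pi * wp m * 1) = wp m * wp m / Real.pi * y := by
        intro y
        field_simp
      calc wp m / Real.sqrt (2^k*Real.pi) * |I m| *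
            (Real.sqrt (2^k*Real.pi)/Real.pi * wp m *
              |(Polynomial.Chebyshev.T ℝ (m:ℤ)).eval (2^k*t - 2*(n:ℝ) + 1)|)
          ≤ wp m / Real.sqrt (2^k*Real.pi) * |I m| *
            (Real.sqrt (2^k*Real.pi)/Real.pi * wp m * 1) := by
            apply mul_le_mul_of_nonneg_left _
              (mul_nonneg (div_nonneg (hwp_nn m) hs0.le) (abs_nonneg _))
            apply mul_le_mul_of_nonneg_left hT
              (mul_nonneg (div_nonneg (Real.sqrt_nonneg _) hπ.le) (hwp_nn m))
        _ = wp m * wp m / Real.pi * |I m| := key _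
    refine habs.trans ?_
    rw [hB_def]
    simp only
    split
    · rename_i hm0
      subst hm0
      rw [show wp 0 = 1 from by rw [wp]; simp]
      calc (1:ℝ) * 1 / Real.pi * |I 0| ≤ 1 * 1 / Real.pi * (ρ₀ * Real.pi) := by
            apply mul_le_mul_of_nonneg_left hI0 (by positivity)
        _ = ρ₀ := by field_simp
    · split
      · rename_i hm0 hm1
        subst hm1
        rw [show wp 1 = Real.sqrt 2 from by rw [wp]; simp]
        rw [Real.mul_self_sqrt (by norm_num)]
        calc (2:ℝ) / Real.pi * |I 1| ≤ 2 / Real.pi * ((1/((1:ℝ)*2^k)) * (ρ₁ * Real.pi)) := by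
              apply mul_le_mul_of_nonneg_left _ (by positivity)
              exact_mod_cast hI1 1 le_rfl
          _ = ρ₁ / 2^(k-1) := by
              rw [h2k]
              field_simp
      · rename_i hm0 hm1
        have hm : 2 ≤ m := by omega
        have hm1' : (1:ℝ) < (m:ℝ) := by exact_mod_cast hm
        have hsq : (0:ℝ) < (m:ℝ)^2 - 1 := by nlinarith
        rw [show wp m = Real.sqrt 2 from by rw [wp]; simp [hm0]]
        rw [Real.mul_self_sqrt (by norm_num)]
        calc (2:ℝ) / Real.pi * |I m|
            ≤ 2 / Real.pi * (ρ * Real.pi / (2^(2*k) * ((m:ℝ)^2 - 1))) := by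
              apply mul_le_mul_of_nonneg_left (hI2 m hm) (by positivity)
          _ = 2*ρ/(2^(2*k)*((m:ℝ)^2-1)) := by
              field_simp
  -- partial sums of B are bounded
  have hpartial : ∀ N, ∑ m ∈ Finset.range N, B m
      ≤ ρ₀ + ρ₁ / 2 ^ (k - 1) + (3 / 4) * (ρ / 2 ^ (2 * k - 1)) := by
    intro N
    have hmono : ∑ m ∈ Finset.range N, B m ≤ ∑ m ∈ Finset.range (2+N), B m :=
      Finset.sum_le_sum_of_subset_of_nonneg (Finset.range_subset_range.mpr (by omega))
        (fun i _ _ => hBnn i)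
    refine hmono.trans ?_
    rw [Finset.sum_range_add]
    have hfirst : ∑ m ∈ Finset.range 2, B m = ρ₀ + ρ₁/2^(k-1) := by
      rw [Finset.sum_range_succ, Finset.sum_range_one, hB_def]
      norm_num
    have hsum2 : ∑ i ∈ Finset.range N, B (2+i)
        = (2*ρ/2^(2*k)) * ∑ i ∈ Finset.range N, (1:ℝ)/(((i:ℝ)+1)*((i:ℝ)+3)) := by
      rw [Finset.mul_sum]
      apply Finset.sum_congr rfl
      intro i _
      rw [hB_def]
      simp only
      rw [if_neg (by omega), if_neg (by omega)]
      have h3 : ((i:ℝ)+1)*((i:ℝ)+3) ≠ 0 := by positivity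
      push_cast
      rw [div_mul_div_comm, mul_one]
      congr 1
      ring
    rw [hfirst, hsum2, telescope]
    have hN1 : (0:ℝ) < 1/(2*((N:ℝ)+1)) := by positivity
    have hN2 : (0:ℝ) < 1/(2*((N:ℝ)+2)) := by positivity
    have htail : (2*ρ/2^(2*k)) * (3/4 - 1/(2*((N:ℝ)+1)) - 1/(2*((N:ℝ)+2)))
        ≤ (2*ρ/2^(2*k)) * (3/4) := by
      apply mul_le_mul_of_nonneg_left _ (by positivity)
      linarith
    have heqtail : (2*ρ/2^(2*k)) * (3/4) = (3/4) * (ρ / 2^(2*k-1)) := by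
      rw [h2k3]
      have : (0:ℝ) < 2^(2*k-1) := by positivity
      field_simp
    linarith
  have hBsum : Summable B := summable_of_sum_range_le hBnn hpartial
  refine ⟨?_, ?_, ?_⟩
  · intro t ht
    exact Summable.of_nonneg_of_le (fun m => abs_nonneg _) (fun m => hterm t ht m) hBsum
  · exact tendstoUniformlyOn_tsum_nat hBsum (fun m t ht => by
      rw [Real.norm_eq_abs]; exact hterm t ht m)
  · intro t ht N
    calc |∑ m ∈ Finset.range N, coeff k n m f * psi k n m t|
        ≤ ∑ m ∈ Finset.range N, |coeff k n m f * psi k n m t| :=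
          Finset.abs_sum_le_sum_abs _ _
      _ ≤ ∑ m ∈ Finset.range N, B m := Finset.sum_le_sum (fun m _ => hterm t ht m)
      _ ≤ _ := hpartial N
end
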